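/- Given r > 0, there exist γ > 0 and T̃ > 0 such that for every T* ∈ [0, T̃], the map F defined by F(ρ)_t(x) = ρ₀(x) exp(−∫₀ᵗ h(ρ_s, x) ds) + ∫₀ᵗ R₂(ρ_s, x) exp(−∫_s^t h(ρ_σ, x) dσ) ds maps the set B_{T*,γ}(r) into itself; that is, if ρ ∈ C([0,T*] → L^∞(ℝ^d)) satisfies ‖ρ‖_{T*,γ} ≤ r and ρ_t ≥ 0 for all t ∈ [0,T*], and ρ₀ ∈ L^∞(ℝ^d) with ρ₀ ≥ 0 and ‖ρ₀‖_{L^∞} ≤ r, then F(ρ) ∈ C([0,T*] → L^∞(ℝ^d)), ‖F(ρ)‖_{T*,γ} ≤ r and F(ρ)_t ≥ 0 for all t ∈ [0,T*]. In fact γ > 1 + 3⟨c₁⟩r/(2⟨c₂⟩) suffices. -/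

import Mathlib

open MeasureTheory Set

noncomputable section

/-- Euclidean space `ℝ^d`, modeled as functions `Fin d → ℝ`. -/
abbrev Rd (d : ℕ) := Fin d → ℝ

/-- The (sup) `L^∞` norm of a function on `ℝ^d`. -/
def linf {d : ℕ} (f : Rd d → ℝ) : ℝ := ⨆ x, |f x|

/-- Membership in `L^∞(ℝ^d)`: measurable and (everywhere) bounded. -/
def MemLinf {d : ℕ} (f : Rd d → ℝ) : Prop := Measurable f ∧ ∃ M : ℝ, ∀ x, |f x| ≤ M

/-- `h(ρ,x) = (1/2) ∬ (c₁(x,y;z)+c₁(y,x;z)) ρ(y) dy dz + ⟨c₂⟩`. -/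
def hker {d : ℕ} (c₁ : Rd d → Rd d → Rd d → ℝ) (C2 : ℝ) (ρ : Rd d → ℝ) (x : Rd d) : ℝ :=
  1/2 * (∫ y, ∫ z, (c₁ x y z + c₁ y x z) * ρ y) + C2

/-- `R₂(ρ,x)`, the positive part of the right-hand side of the kinetic equation. -/
def R2 {d : ℕ} (c₁ : Rd d → Rd d → Rd d → ℝ) (c₂ : Rd d → Rd d → ℝ)
    (φ₁ φ₂ : Rd d → ℝ) (ρ : Rd d → ℝ) (x : Rd d) : ℝ :=
  1/2 * (∫ y, ∫ z, c₁ y z x * Real.exp (-∫ u, φ₁ (x - u) * ρ u) * ρ y * ρ z)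
    + 1/2 * (∫ y, ∫ z, (c₁ x y z + c₁ y x z) *
        (1 - Real.exp (-∫ u, φ₁ (z - u) * ρ u)) * ρ x * ρ y)
    + (∫ y, c₂ y x * Real.exp (-∫ u, φ₂ (x - u) * ρ u) * ρ y)
    + (∫ y, c₂ x y * (1 - Real.exp (-∫ u, φ₂ (y - u) * ρ u)) * ρ x)

/-- The fixed point map `F` given by the right-hand side of the integral equation. -/
def Fmap {d : ℕ} (c₁ : Rd d → Rd d → Rd d → ℝ) (c₂ : Rd d → Rd d → ℝ)
    (φ₁ φ₂ : Rd d → ℝ) (C2 : ℝ) (ρ₀ : Rd d → ℝ) (ρ : ℝ → Rd d → ℝ) (t : ℝ) (x : Rd d) : ℝ :=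
  ρ₀ x * Real.exp (-∫ s in (0:ℝ)..t, hker c₁ C2 (ρ s) x)
    + ∫ s in (0:ℝ)..t, R2 c₁ c₂ φ₁ φ₂ (ρ s) x * Real.exp (-∫ σ in s..t, hker c₁ C2 (ρ σ) x)

/-- The weighted norm `‖ρ‖_{T,γ} = sup_{t∈[0,T]} e^{-γ⟨c₂⟩t} ‖ρ_t‖_{L^∞}`. -/
def normTg {d : ℕ} (T γ C2 : ℝ) (ρ : ℝ → Rd d → ℝ) : ℝ :=
  ⨆ t : Icc (0:ℝ) T, Real.exp (-(γ * C2 * t.1)) * linf (ρ t.1)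

/-- Continuity on `S ⊆ ℝ` of a curve of functions, in the `L^∞` norm. -/
def LinfContOn {d : ℕ} (S : Set ℝ) (ρ : ℝ → Rd d → ℝ) : Prop :=
  ∀ t ∈ S, ∀ ε > 0, ∃ δ > 0, ∀ s ∈ S, |s - t| < δ → linf (fun x => ρ s x - ρ t x) < ε

/-- Membership in the ball `B_{T,γ}(r) ⊆ C([0,T] → L^∞)`. -/
def memB {d : ℕ} (T γ C2 r : ℝ) (ρ : ℝ → Rd d → ℝ) : Prop :=
  LinfContOn (Icc 0 T) ρ ∧ (∀ t ∈ Icc (0:ℝ) T, MemLinf (ρ t)) ∧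
    (∀ t ∈ Icc (0:ℝ) T, ∀ x, 0 ≤ ρ t x) ∧ normTg T γ C2 ρ ≤ r

/-- Differentiability at `t` (within `S ⊆ ℝ`) of a curve, in the `L^∞` norm,
with derivative `g`. -/
def HasLinfDerivWithinAt {d : ℕ} (ρ : ℝ → Rd d → ℝ) (g : Rd d → ℝ) (S : Set ℝ) (t : ℝ) : Prop :=
  ∀ ε > 0, ∃ δ > 0, ∀ s ∈ S, |s - t| < δ →
    linf (fun x => ρ s x - ρ t x - (s - t) * g x) ≤ ε * |s - t|

/-- The right-hand side of the kinetic equation: `−ρ(x) h(ρ,x) + R₂(ρ,x)`. -/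
def kderiv {d : ℕ} (c₁ : Rd d → Rd d → Rd d → ℝ) (c₂ : Rd d → Rd d → ℝ)
    (φ₁ φ₂ : Rd d → ℝ) (C2 : ℝ) (ρ : Rd d → ℝ) : Rd d → ℝ :=
  fun x => -(ρ x) * hker c₁ C2 ρ x + R2 c₁ c₂ φ₁ φ₂ ρ x

/-- `ρ` is a (local) classical solution of the kinetic equation on `[0,T]` with initial
value `ρ₀`: nonnegative and `L^∞`-valued, continuously differentiable in the `L^∞` norm,
and satisfying `d/dt ρ_t = −ρ_t·h(ρ_t,·) + R₂(ρ_t,·)`, `ρ_0 = ρ₀`. -/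
def IsSol {d : ℕ} (c₁ : Rd d → Rd d → Rd d → ℝ) (c₂ : Rd d → Rd d → ℝ)
    (φ₁ φ₂ : Rd d → ℝ) (C2 : ℝ) (ρ₀ : Rd d → ℝ) (T : ℝ) (ρ : ℝ → Rd d → ℝ) : Prop :=
  (∀ t ∈ Icc (0:ℝ) T, MemLinf (ρ t)) ∧ (∀ t ∈ Icc (0:ℝ) T, ∀ x, 0 ≤ ρ t x) ∧
    ρ 0 = ρ₀ ∧
    (∀ t ∈ Icc (0:ℝ) T, HasLinfDerivWithinAt ρ (kderiv c₁ c₂ φ₁ φ₂ C2 (ρ t)) (Icc 0 T) t) ∧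
    LinfContOn (Icc 0 T) (fun t => kderiv c₁ c₂ φ₁ φ₂ C2 (ρ t))

section Helpers
variable {d : ℕ}

lemma linf_nonneg (f : Rd d → ℝ) : 0 ≤ linf f := Real.iSup_nonneg fun x => abs_nonneg _

lemma linf_le {f : Rd d → ℝ} {M : ℝ} (h : ∀ x, |f x| ≤ M) : linf f ≤ M := ciSup_le h

lemma abs_le_linf {f : Rd d → ℝ} (h : ∃ M, ∀ x, |f x| ≤ M) (x : Rd d) : |f x| ≤ linf f := by
  obtain ⟨M, hM⟩ := h
  exact le_ciSup ⟨M, by rintro v ⟨x, rfl⟩; exact hM x⟩ x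

lemma exp_neg_le_one {a : ℝ} (ha : 0 ≤ a) : Real.exp (-a) ≤ 1 := by
  rw [Real.exp_le_one_iff]; linarith

lemma exp_lip {a b : ℝ} (ha : 0 ≤ a) (hb : 0 ≤ b) :
    |Real.exp (-a) - Real.exp (-b)| ≤ |a - b| := by
  wlog hab : b ≤ a generalizing a b
  · rw [abs_sub_comm, abs_sub_comm a b]; exact this hb ha (le_of_not_ge hab)
  have h1 : Real.exp (-a) ≤ Real.exp (-b) := Real.exp_le_exp.mpr (by linarith)
  rw [abs_of_nonpos (by linarith), abs_of_nonneg (by linarith)]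
  have h2 : Real.exp (-b) - Real.exp (-a) = Real.exp (-b) * (1 - Real.exp (-(a - b))) := by
    rw [mul_sub, mul_one, ← Real.exp_add]; ring_nf
  have h3 : 1 - Real.exp (-(a - b)) ≤ a - b := by
    have := Real.add_one_le_exp (-(a - b)); linarith
  have h4 : 0 ≤ 1 - Real.exp (-(a - b)) := by
    have := exp_neg_le_one (a := a - b) (by linarith); linarith
  have h5 : Real.exp (-b) * (1 - Real.exp (-(a - b))) ≤ 1 * (a - b) :=
    mul_le_mul (exp_neg_le_one hb) h3 h4 zero_le_one
  linarith

lemma double_nonneg {F : Rd d → Rd d → ℝ} (h : ∀ y z, 0 ≤ F y z) :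
    0 ≤ ∫ y, ∫ z, F y z :=
  integral_nonneg fun y => integral_nonneg (h y)

lemma double_le {F : Rd d → Rd d → ℝ} {G : Rd d × Rd d → ℝ}
    (hFnn : ∀ y z, 0 ≤ F y z) (hle : ∀ y z, F y z ≤ G (y, z))
    (hG : Integrable G) : (∫ y, ∫ z, F y z) ≤ ∫ p, G p := by
  rw [Measure.volume_eq_prod] at hG ⊢
  rw [integral_prod _ hG]
  have h2 : Integrable (fun y => ∫ z, G (y, z)) := hG.integral_prod_left
  refine integral_mono_of_nonneg (.of_forall fun y => integral_nonneg (hFnn y)) h2 ?_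
  filter_upwards [hG.prod_right_ae] with y hy
  exact integral_mono_of_nonneg (.of_forall (hFnn y)) hy (.of_forall (hle y))

lemma double_eq_prod {G : Rd d × Rd d → ℝ} (hG : Integrable G) :
    (∫ y, ∫ z, G (y, z)) = ∫ p, G p := by
  rw [Measure.volume_eq_prod] at hG ⊢
  rw [integral_prod _ hG]

lemma meas_int {α : Type*} [MeasurableSpace α] {g : α × Rd d → ℝ} (hg : Measurable g) :
    Measurable fun a => ∫ u, g (a, u) :=
  (hg.stronglyMeasurable.integral_prod_right').measurable

lemma meas_int_restr {α : Type*} [MeasurableSpace α] {g : α × ℝ → ℝ} (hg : Measurable g)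
    (s : Set ℝ) : Measurable fun a => ∫ u in s, g (a, u) :=
  (hg.stronglyMeasurable.integral_prod_right' (ν := volume.restrict s)).measurable

def clip (T t : ℝ) : ℝ := max 0 (min t T)

lemma clip_mem {T : ℝ} (hT : 0 ≤ T) (t : ℝ) : clip T t ∈ Icc (0:ℝ) T :=
  ⟨le_max_left _ _, max_le hT (min_le_right _ _)⟩

lemma clip_eq {T t : ℝ} (h : t ∈ Icc (0:ℝ) T) : clip T t = t := by
  rw [clip, min_eq_left h.2, max_eq_right h.1]

lemma min_lip (T a b : ℝ) : |min a T - min b T| ≤ |a - b| := by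
  have h1 := le_abs_self (a - b)
  have h2 := neg_abs_le (a - b)
  rcases le_total a T with hA | hA <;> rcases le_total b T with hB | hB <;>
    rw [abs_sub_le_iff] <;> constructor <;>
    simp only [min_eq_left, min_eq_right, hA, hB] <;> linarith

lemma clip_lip (T a b : ℝ) : |clip T a - clip T b| ≤ |a - b| := by
  calc |clip T a - clip T b| = |max (min a T) 0 - max (min b T) 0| := by
        rw [clip, clip, max_comm (0:ℝ), max_comm (0:ℝ)]
    _ ≤ |min a T - min b T| := abs_max_sub_max_le_abs _ _ _
    _ ≤ |a - b| := min_lip T a b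

lemma abs_linf_sub_linf_le {f g : Rd d → ℝ} (hf : ∃ M, ∀ x, |f x| ≤ M)
    (hg : ∃ M, ∀ x, |g x| ≤ M) : |linf f - linf g| ≤ linf fun x => f x - g x := by
  obtain ⟨Mf, hMf⟩ := hf; obtain ⟨Mg, hMg⟩ := hg
  have hd : ∃ M, ∀ x, |f x - g x| ≤ M := ⟨Mf + Mg, fun x => (abs_sub _ _).trans (by
    exact add_le_add (hMf x) (hMg x))⟩
  rw [abs_sub_le_iff]
  constructor
  · rw [sub_le_iff_le_add]
    refine linf_le fun x => ?_
    calc |f x| = |g x + (f x - g x)| := by ring_nf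
      _ ≤ |g x| + |f x - g x| := abs_add_le _ _
      _ ≤ linf (fun x => f x - g x) + linf g := by
          have h1 := abs_le_linf ⟨Mg, hMg⟩ x; have h2 := abs_le_linf hd x; linarith
  · rw [sub_le_iff_le_add]
    refine linf_le fun x => ?_
    calc |g x| = |f x + (g x - f x)| := by ring_nf
      _ ≤ |f x| + |g x - f x| := abs_add_le _ _
      _ ≤ linf (fun x => f x - g x) + linf f := by
          have h1 := abs_le_linf ⟨Mf, hMf⟩ x; have h2 := abs_le_linf hd x
          rw [abs_sub_comm] at h2; linarith

lemma bddMeasII {g : ℝ → ℝ} (hg : Measurable g) {C a b : ℝ}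
    (hb : ∀ s ∈ Set.uIoc a b, |g s| ≤ C) : IntervalIntegrable g volume a b := by
  constructor <;>
  · refine ⟨hg.aestronglyMeasurable, ?_⟩
    haveI : IsFiniteMeasure (volume.restrict (Ioc a b)) :=
      ⟨by rw [Measure.restrict_apply_univ]; exact measure_Ioc_lt_top⟩
    haveI : IsFiniteMeasure (volume.restrict (Ioc b a)) :=
      ⟨by rw [Measure.restrict_apply_univ]; exact measure_Ioc_lt_top⟩
    refine HasFiniteIntegral.of_bounded (C := C) ?_
    rw [ae_restrict_iff' measurableSet_Ioc]
    refine .of_forall fun s hs => hb s ?_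
    first
      | exact Ioc_subset_uIoc hs
      | exact Ioc_subset_uIoc' hs

end Helpers
section Joint
variable {d : ℕ}

lemma jointMeas {T' : ℝ} (hT : 0 ≤ T') {ρ : ℝ → Rd d → ℝ}
    (hcont : LinfContOn (Icc 0 T') ρ) (hmem : ∀ t ∈ Icc (0:ℝ) T', MemLinf (ρ t)) :
    Measurable fun p : ℝ × Rd d => ρ (clip T' p.1) p.2 := by
  set e : ℕ → ℝ → ℝ := fun n s => clip T' ((⌊s * ((n:ℝ)+1)⌋ : ℤ) / ((n:ℝ)+1)) with he
  have hm : ∀ n : ℕ, (0:ℝ) < (n:ℝ) + 1 := fun n => by positivity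
  have hdist : ∀ n s, |e n s - clip T' s| ≤ 1 / ((n:ℝ)+1) := by
    intro n s
    refine (clip_lip _ _ _).trans ?_
    have hm0 := hm n
    have hf1 : ((⌊s * ((n:ℝ)+1)⌋ : ℤ) : ℝ) ≤ s * ((n:ℝ)+1) := Int.floor_le _
    have hf2 : s * ((n:ℝ)+1) - 1 ≤ ((⌊s * ((n:ℝ)+1)⌋ : ℤ) : ℝ) := by
      have := Int.sub_one_lt_floor (s * ((n:ℝ)+1)); linarith
    rw [abs_sub_le_iff]
    constructor
    · have h1 : ((⌊s * ((n:ℝ)+1)⌋ : ℤ) : ℝ) / ((n:ℝ)+1) ≤ s := by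
        rw [div_le_iff₀ hm0]; linarith
      have : 0 < 1 / ((n:ℝ)+1) := by positivity
      linarith
    · have h2 : s ≤ (((⌊s * ((n:ℝ)+1)⌋ : ℤ) : ℝ) + 1) / ((n:ℝ)+1) := by
        rw [le_div_iff₀ hm0]; linarith
      rw [add_div] at h2
      linarith
  have hemem : ∀ n s, e n s ∈ Icc (0:ℝ) T' := fun n s => clip_mem hT _
  have hmeasn : ∀ n : ℕ, Measurable fun p : ℝ × Rd d => ρ (e n p.1) p.2 := by
    intro n
    set S : Set ℝ := Set.range (fun k : ℤ => clip T' ((k:ℝ) / ((n:ℝ)+1))) with hS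
    haveI : Countable S := (Set.countable_range _).to_subtype
    have hen : Measurable fun s : ℝ => (⟨e n s, ⟨⌊s * ((n:ℝ)+1)⌋, rfl⟩⟩ : S) := by
      refine Measurable.subtype_mk ?_
      have h1 : Measurable fun s : ℝ => ((⌊s * ((n:ℝ)+1)⌋ : ℤ) : ℝ) / ((n:ℝ)+1) :=
        ((measurable_of_countable (fun k : ℤ => (k:ℝ))).comp
          (Int.measurable_floor.comp (measurable_id.mul_const _))).div_const _
      have h2 : Continuous fun t : ℝ => clip T' t :=
        continuous_const.max (continuous_id.min continuous_const)
      exact h2.measurable.comp h1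
    have hG : Measurable fun q : Rd d × S => ρ (q.2 : ℝ) q.1 := by
      refine measurable_from_prod_countable_left fun a => ?_
      obtain ⟨k, hk⟩ := a.2
      exact (hmem a.1 (hk ▸ clip_mem hT _)).1
    exact hG.comp ((measurable_snd).prodMk (hen.comp measurable_fst))
  refine measurable_of_tendsto_metrizable hmeasn ?_
  rw [tendsto_pi_nhds]
  rintro ⟨s, x⟩
  rw [Metric.tendsto_atTop]
  intro ε hε
  obtain ⟨δ, hδ0, hδ⟩ := hcont (clip T' s) (clip_mem hT s) ε hε
  obtain ⟨N, hN⟩ := exists_nat_gt (1/δ)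
  refine ⟨N, fun n hn => ?_⟩
  have h1 : |e n s - clip T' s| < δ := by
    refine lt_of_le_of_lt (hdist n s) ?_
    rw [div_lt_iff₀ (hm n)]
    have h2 : (1:ℝ)/δ < (n:ℝ)+1 := by
      have : (N:ℝ) ≤ (n:ℝ) := Nat.cast_le.mpr hn
      linarith
    rw [div_lt_iff₀ hδ0] at h2
    linarith
  have h3 := hδ (e n s) (hemem n s) h1
  have hb : ∃ M, ∀ y, |ρ (e n s) y - ρ (clip T' s) y| ≤ M := by
    obtain ⟨M1, hM1⟩ := (hmem _ (hemem n s)).2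
    obtain ⟨M2, hM2⟩ := (hmem _ (clip_mem hT s)).2
    exact ⟨M1 + M2, fun y => (abs_sub _ _).trans (add_le_add (hM1 y) (hM2 y))⟩
  calc dist (ρ (e n s) x) (ρ (clip T' s) x) = |ρ (e n s) x - ρ (clip T' s) x| := Real.dist_eq _ _
    _ ≤ linf (fun y => ρ (e n s) y - ρ (clip T' s) y) := abs_le_linf hb x
    _ < ε := h3

end Joint
section MeasComp
variable {d : ℕ} {c₁ : Rd d → Rd d → Rd d → ℝ} {c₂ : Rd d → Rd d → ℝ} {φ₁ φ₂ : Rd d → ℝ}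
  {C2 : ℝ} {ρb : ℝ → Rd d → ℝ}

lemma mc1 (hc₁meas : Measurable fun p : Rd d × Rd d × Rd d => c₁ p.1 p.2.1 p.2.2)
    {α : Type*} [MeasurableSpace α] {f g h : α → Rd d} (hf : Measurable f)
    (hg : Measurable g) (hh : Measurable h) : Measurable fun a => c₁ (f a) (g a) (h a) :=
  hc₁meas.comp (hf.prodMk (hg.prodMk hh))

lemma mc2 (hc₂meas : Measurable fun p : Rd d × Rd d => c₂ p.1 p.2)
    {α : Type*} [MeasurableSpace α] {f g : α → Rd d} (hf : Measurable f) (hg : Measurable g) :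
    Measurable fun a => c₂ (f a) (g a) := hc₂meas.comp (hf.prodMk hg)

lemma mrb (hb : Measurable fun p : ℝ × Rd d => ρb p.1 p.2)
    {α : Type*} [MeasurableSpace α] {f : α → ℝ} {g : α → Rd d} (hf : Measurable f)
    (hg : Measurable g) : Measurable fun a => ρb (f a) (g a) := hb.comp (hf.prodMk hg)

lemma m_I (hφ : Measurable φ₁) (hb : Measurable fun p : ℝ × Rd d => ρb p.1 p.2) :
    Measurable fun w : ℝ × Rd d => ∫ u, φ₁ (w.2 - u) * ρb w.1 u :=
  meas_int ((hφ.comp ((measurable_snd.comp measurable_fst).sub measurable_snd)).mul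
    (mrb hb (measurable_fst.comp measurable_fst) measurable_snd))

lemma meas_int2 {α : Type*} [MeasurableSpace α] (g : α → Rd d → ℝ)
    (hg : Measurable fun w : α × Rd d => g w.1 w.2) : Measurable fun a => ∫ u, g a u :=
  meas_int hg

lemma m_hker (hc₁meas : Measurable fun p : Rd d × Rd d × Rd d => c₁ p.1 p.2.1 p.2.2)
    (hb : Measurable fun p : ℝ × Rd d => ρb p.1 p.2) :
    Measurable fun q : ℝ × Rd d => hker c₁ C2 (ρb q.1) q.2 := by
  unfold hker
  refine Measurable.add (measurable_const.mul ?_) measurable_const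
  refine meas_int2 _ (meas_int2 _ ?_)
  have pq : Measurable fun v : ((ℝ × Rd d) × Rd d) × Rd d => v.1.1 :=
    measurable_fst.comp measurable_fst
  have pt : Measurable fun v : ((ℝ × Rd d) × Rd d) × Rd d => v.1.1.1 := measurable_fst.comp pq
  have px : Measurable fun v : ((ℝ × Rd d) × Rd d) × Rd d => v.1.1.2 := measurable_snd.comp pq
  have py : Measurable fun v : ((ℝ × Rd d) × Rd d) × Rd d => v.1.2 :=
    measurable_snd.comp measurable_fst
  exact ((mc1 hc₁meas px py measurable_snd).add (mc1 hc₁meas py px measurable_snd)).mul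
    (mrb hb pt py)

lemma m_R2 (hc₁meas : Measurable fun p : Rd d × Rd d × Rd d => c₁ p.1 p.2.1 p.2.2)
    (hc₂meas : Measurable fun p : Rd d × Rd d => c₂ p.1 p.2)
    (hφ₁ : Measurable φ₁) (hφ₂ : Measurable φ₂)
    (hb : Measurable fun p : ℝ × Rd d => ρb p.1 p.2) :
    Measurable fun q : ℝ × Rd d => R2 c₁ c₂ φ₁ φ₂ (ρb q.1) q.2 := by
  have hI1 := m_I (ρb := ρb) hφ₁ hb
  have hI2 := m_I (ρb := ρb) hφ₂ hb
  unfold R2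
  refine Measurable.add (Measurable.add (Measurable.add ?_ ?_) ?_) ?_
  · -- term 1
    refine measurable_const.mul ?_
    refine meas_int2 _ (meas_int2 _ ?_)
    have pq : Measurable fun v : ((ℝ × Rd d) × Rd d) × Rd d => v.1.1 :=
      measurable_fst.comp measurable_fst
    have pt : Measurable fun v : ((ℝ × Rd d) × Rd d) × Rd d => v.1.1.1 := measurable_fst.comp pq
    have px : Measurable fun v : ((ℝ × Rd d) × Rd d) × Rd d => v.1.1.2 := measurable_snd.comp pq
    have py : Measurable fun v : ((ℝ × Rd d) × Rd d) × Rd d => v.1.2 :=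
      measurable_snd.comp measurable_fst
    exact (((mc1 hc₁meas py measurable_snd px).mul
        (Real.measurable_exp.comp ((hI1.comp pq).neg))).mul
      (mrb hb pt py)).mul (mrb hb pt measurable_snd)
  · -- term 2
    refine measurable_const.mul ?_
    refine meas_int2 _ (meas_int2 _ ?_)
    have pq : Measurable fun v : ((ℝ × Rd d) × Rd d) × Rd d => v.1.1 :=
      measurable_fst.comp measurable_fst
    have pt : Measurable fun v : ((ℝ × Rd d) × Rd d) × Rd d => v.1.1.1 := measurable_fst.comp pq
    have px : Measurable fun v : ((ℝ × Rd d) × Rd d) × Rd d => v.1.1.2 := measurable_snd.comp pq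
    have py : Measurable fun v : ((ℝ × Rd d) × Rd d) × Rd d => v.1.2 :=
      measurable_snd.comp measurable_fst
    exact ((((mc1 hc₁meas px py measurable_snd).add (mc1 hc₁meas py px measurable_snd)).mul
      (measurable_const.sub
        (Real.measurable_exp.comp ((hI1.comp (pt.prodMk measurable_snd)).neg)))).mul
      (mrb hb pt px)).mul (mrb hb pt py)
  · -- term 3
    refine meas_int2 _ ?_
    -- w : (ℝ × Rd d) × Rd d
    exact ((mc2 hc₂meas measurable_snd (measurable_snd.comp measurable_fst)).mul
      (Real.measurable_exp.comp ((hI2.comp measurable_fst).neg))).mul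
      (mrb hb (measurable_fst.comp measurable_fst) measurable_snd)
  · -- term 4
    refine meas_int2 _ ?_
    exact ((mc2 hc₂meas (measurable_snd.comp measurable_fst) measurable_snd).mul
      (measurable_const.sub (Real.measurable_exp.comp
        ((hI2.comp ((measurable_fst.comp measurable_fst).prodMk measurable_snd)).neg)))).mul
      (mrb hb (measurable_fst.comp measurable_fst) (measurable_snd.comp measurable_fst))

end MeasComp
section Bounds
variable {d : ℕ} {c₁ : Rd d → Rd d → Rd d → ℝ} {c₂ : Rd d → Rd d → ℝ} {φ₁ φ₂ : Rd d → ℝ}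
  {C1 C2 : ℝ}

lemma prodval_a (hc₁int₂₃ : ∀ x, Integrable fun p : Rd d × Rd d => c₁ x p.1 p.2)
    (hc₁val₂₃ : ∀ x, (∫ y, ∫ z, c₁ x y z) = C1) (x : Rd d) :
    (∫ p : Rd d × Rd d, c₁ x p.1 p.2) = C1 := by
  rw [Measure.volume_eq_prod, integral_prod _ (by rw [← Measure.volume_eq_prod]; exact hc₁int₂₃ x)]
  exact hc₁val₂₃ x

lemma prodval_b (hc₁int₁₃ : ∀ y, Integrable fun p : Rd d × Rd d => c₁ p.1 y p.2)
    (hc₁val₁₃ : ∀ y, (∫ x, ∫ z, c₁ x y z) = C1) (x : Rd d) :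
    (∫ p : Rd d × Rd d, c₁ p.1 x p.2) = C1 := by
  rw [Measure.volume_eq_prod, integral_prod _ (by rw [← Measure.volume_eq_prod]; exact hc₁int₁₃ x)]
  exact hc₁val₁₃ x

lemma prodval_c (hc₁int₁₂ : ∀ z, Integrable fun p : Rd d × Rd d => c₁ p.1 p.2 z)
    (hc₁val₁₂ : ∀ z, (∫ x, ∫ y, c₁ x y z) = C1) (x : Rd d) :
    (∫ p : Rd d × Rd d, c₁ p.1 p.2 x) = C1 := by
  rw [Measure.volume_eq_prod, integral_prod _ (by rw [← Measure.volume_eq_prod]; exact hc₁int₁₂ x)]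
  exact hc₁val₁₂ x

lemma hker_lb (hc₁nn : ∀ x y z, 0 ≤ c₁ x y z) {f : Rd d → ℝ} (hf : ∀ y, 0 ≤ f y) (x : Rd d) :
    C2 ≤ hker c₁ C2 f x := by
  have h := double_nonneg (F := fun y z => (c₁ x y z + c₁ y x z) * f y)
    (fun y z => mul_nonneg (add_nonneg (hc₁nn _ _ _) (hc₁nn _ _ _)) (hf y))
  unfold hker; linarith

lemma hker_ub (hc₁nn : ∀ x y z, 0 ≤ c₁ x y z)
    (hc₁int₁₃ : ∀ y, Integrable fun p : Rd d × Rd d => c₁ p.1 y p.2)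
    (hc₁int₂₃ : ∀ x, Integrable fun p : Rd d × Rd d => c₁ x p.1 p.2)
    (hc₁val₁₃ : ∀ y, (∫ x, ∫ z, c₁ x y z) = C1)
    (hc₁val₂₃ : ∀ x, (∫ y, ∫ z, c₁ x y z) = C1)
    {f : Rd d → ℝ} {m : ℝ} (hfnn : ∀ y, 0 ≤ f y) (hfm : ∀ y, f y ≤ m) (x : Rd d) :
    hker c₁ C2 f x ≤ C1 * m + C2 := by
  have hG : Integrable (fun p : Rd d × Rd d => (c₁ x p.1 p.2 + c₁ p.1 x p.2) * m) :=
    ((hc₁int₂₃ x).add (hc₁int₁₃ x)).mul_const m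
  have key := double_le (F := fun y z => (c₁ x y z + c₁ y x z) * f y)
    (G := fun p => (c₁ x p.1 p.2 + c₁ p.1 x p.2) * m)
    (fun y z => mul_nonneg (add_nonneg (hc₁nn _ _ _) (hc₁nn _ _ _)) (hfnn y))
    (fun y z => mul_le_mul_of_nonneg_left (hfm y) (add_nonneg (hc₁nn _ _ _) (hc₁nn _ _ _))) hG
  have hval : (∫ p : Rd d × Rd d, (c₁ x p.1 p.2 + c₁ p.1 x p.2) * m) = (C1 + C1) * m := by
    rw [integral_mul_const, integral_add (hc₁int₂₃ x) (hc₁int₁₃ x),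
      prodval_a hc₁int₂₃ hc₁val₂₃ x, prodval_b hc₁int₁₃ hc₁val₁₃ x]
  rw [hval] at key
  unfold hker; linarith

lemma R2_nonneg (hc₁nn : ∀ x y z, 0 ≤ c₁ x y z) (hc₂nn : ∀ x y, 0 ≤ c₂ x y)
    (hφ₁nn : ∀ u, 0 ≤ φ₁ u) (hφ₂nn : ∀ u, 0 ≤ φ₂ u)
    {f : Rd d → ℝ} (hf : ∀ y, 0 ≤ f y) (x : Rd d) : 0 ≤ R2 c₁ c₂ φ₁ φ₂ f x := by
  have hA : ∀ (φ : Rd d → ℝ), (∀ u, 0 ≤ φ u) → ∀ z : Rd d, 0 ≤ ∫ u, φ (z - u) * f u :=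
    fun φ hφ z => integral_nonneg fun u => mul_nonneg (hφ _) (hf u)
  have hE1 : ∀ z : Rd d, Real.exp (-∫ u, φ₁ (z - u) * f u) ≤ 1 :=
    fun z => exp_neg_le_one (hA φ₁ hφ₁nn z)
  have hE2 : ∀ z : Rd d, Real.exp (-∫ u, φ₂ (z - u) * f u) ≤ 1 :=
    fun z => exp_neg_le_one (hA φ₂ hφ₂nn z)
  unfold R2
  have t1 : 0 ≤ ∫ y, ∫ z, c₁ y z x * Real.exp (-∫ u, φ₁ (x - u) * f u) * f y * f z :=
    double_nonneg fun y z => mul_nonneg (mul_nonneg (mul_nonneg (hc₁nn _ _ _)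
      (Real.exp_pos _).le) (hf y)) (hf z)
  have t2 : 0 ≤ ∫ y, ∫ z, (c₁ x y z + c₁ y x z) *
      (1 - Real.exp (-∫ u, φ₁ (z - u) * f u)) * f x * f y :=
    double_nonneg fun y z => mul_nonneg (mul_nonneg (mul_nonneg
      (add_nonneg (hc₁nn _ _ _) (hc₁nn _ _ _)) (by have := hE1 z; linarith)) (hf x)) (hf y)
  have t3 : 0 ≤ ∫ y, c₂ y x * Real.exp (-∫ u, φ₂ (x - u) * f u) * f y :=
    integral_nonneg fun y => mul_nonneg (mul_nonneg (hc₂nn _ _) (Real.exp_pos _).le) (hf y)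
  have t4 : 0 ≤ ∫ y, c₂ x y * (1 - Real.exp (-∫ u, φ₂ (y - u) * f u)) * f x :=
    integral_nonneg fun y => mul_nonneg (mul_nonneg (hc₂nn _ _)
      (by have := hE2 y; linarith)) (hf x)
  linarith

lemma R2_ub (hc₁nn : ∀ x y z, 0 ≤ c₁ x y z) (hc₂nn : ∀ x y, 0 ≤ c₂ x y)
    (hc₁int₁₂ : ∀ z, Integrable fun p : Rd d × Rd d => c₁ p.1 p.2 z)
    (hc₁int₁₃ : ∀ y, Integrable fun p : Rd d × Rd d => c₁ p.1 y p.2)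
    (hc₁int₂₃ : ∀ x, Integrable fun p : Rd d × Rd d => c₁ x p.1 p.2)
    (hc₁val₁₂ : ∀ z, (∫ x, ∫ y, c₁ x y z) = C1)
    (hc₁val₁₃ : ∀ y, (∫ x, ∫ z, c₁ x y z) = C1)
    (hc₁val₂₃ : ∀ x, (∫ y, ∫ z, c₁ x y z) = C1)
    (hc₂int₁ : ∀ y, Integrable fun x => c₂ x y)
    (hc₂int₂ : ∀ x, Integrable fun y => c₂ x y)
    (hc₂val₁ : ∀ y, (∫ x, c₂ x y) = C2)
    (hc₂val₂ : ∀ x, (∫ y, c₂ x y) = C2)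
    (hφ₁nn : ∀ u, 0 ≤ φ₁ u) (hφ₂nn : ∀ u, 0 ≤ φ₂ u)
    {f : Rd d → ℝ} {m : ℝ} (hfnn : ∀ y, 0 ≤ f y) (hfm : ∀ y, f y ≤ m) (x : Rd d) :
    R2 c₁ c₂ φ₁ φ₂ f x ≤ 3/2 * C1 * m^2 + 2 * C2 * m := by
  have hm : 0 ≤ m := le_trans (hfnn x) (hfm x)
  have hA : ∀ (φ : Rd d → ℝ), (∀ u, 0 ≤ φ u) → ∀ z : Rd d, 0 ≤ ∫ u, φ (z - u) * f u :=
    fun φ hφ z => integral_nonneg fun u => mul_nonneg (hφ _) (hfnn u)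
  have hE1 : ∀ z : Rd d, Real.exp (-∫ u, φ₁ (z - u) * f u) ≤ 1 :=
    fun z => exp_neg_le_one (hA φ₁ hφ₁nn z)
  have hE2 : ∀ z : Rd d, Real.exp (-∫ u, φ₂ (z - u) * f u) ≤ 1 :=
    fun z => exp_neg_le_one (hA φ₂ hφ₂nn z)
  have t1 : (∫ y, ∫ z, c₁ y z x * Real.exp (-∫ u, φ₁ (x - u) * f u) * f y * f z)
      ≤ C1 * (m * m) := by
    have key := double_le (F := fun y z => c₁ y z x * Real.exp (-∫ u, φ₁ (x - u) * f u) * f y * f z)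
      (G := fun p => c₁ p.1 p.2 x * (m * m))
      (fun y z => mul_nonneg (mul_nonneg (mul_nonneg (hc₁nn _ _ _) (Real.exp_pos _).le)
        (hfnn y)) (hfnn z))
      (fun y z => by
        have h1 : c₁ y z x * Real.exp (-∫ u, φ₁ (x - u) * f u) ≤ c₁ y z x :=
          mul_le_of_le_one_right (hc₁nn _ _ _) (hE1 x)
        calc c₁ y z x * Real.exp (-∫ u, φ₁ (x - u) * f u) * f y * f z
            ≤ c₁ y z x * f y * f z := by
              apply mul_le_mul_of_nonneg_right (mul_le_mul_of_nonneg_right h1 (hfnn y)) (hfnn z)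
          _ ≤ c₁ y z x * m * m := by
              apply mul_le_mul (mul_le_mul_of_nonneg_left (hfm y) (hc₁nn _ _ _)) (hfm z) (hfnn z)
                (mul_nonneg (hc₁nn _ _ _) hm)
          _ = c₁ y z x * (m * m) := by ring)
      ((hc₁int₁₂ x).mul_const (m * m))
    rwa [integral_mul_const, prodval_c hc₁int₁₂ hc₁val₁₂ x] at key
  have t2 : (∫ y, ∫ z, (c₁ x y z + c₁ y x z) *
      (1 - Real.exp (-∫ u, φ₁ (z - u) * f u)) * f x * f y) ≤ (C1 + C1) * (m * m) := by
    have key := double_le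
      (F := fun y z => (c₁ x y z + c₁ y x z) *
        (1 - Real.exp (-∫ u, φ₁ (z - u) * f u)) * f x * f y)
      (G := fun p => (c₁ x p.1 p.2 + c₁ p.1 x p.2) * (m * m))
      (fun y z => mul_nonneg (mul_nonneg (mul_nonneg
        (add_nonneg (hc₁nn _ _ _) (hc₁nn _ _ _)) (by have := hE1 z; linarith)) (hfnn x)) (hfnn y))
      (fun y z => by
        have hcnn : 0 ≤ c₁ x y z + c₁ y x z := add_nonneg (hc₁nn _ _ _) (hc₁nn _ _ _)
        have h1 : (c₁ x y z + c₁ y x z) * (1 - Real.exp (-∫ u, φ₁ (z - u) * f u))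
            ≤ c₁ x y z + c₁ y x z := by
          apply mul_le_of_le_one_right hcnn
          have := Real.exp_pos (-∫ u, φ₁ (z - u) * f u); linarith
        calc (c₁ x y z + c₁ y x z) * (1 - Real.exp (-∫ u, φ₁ (z - u) * f u)) * f x * f y
            ≤ (c₁ x y z + c₁ y x z) * f x * f y := by
              apply mul_le_mul_of_nonneg_right (mul_le_mul_of_nonneg_right h1 (hfnn x)) (hfnn y)
          _ ≤ (c₁ x y z + c₁ y x z) * m * m := by
              apply mul_le_mul (mul_le_mul_of_nonneg_left (hfm x) hcnn) (hfm y) (hfnn y)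
                (mul_nonneg hcnn hm)
          _ = (c₁ x y z + c₁ y x z) * (m * m) := by ring)
      (((hc₁int₂₃ x).add (hc₁int₁₃ x)).mul_const (m * m))
    rwa [integral_mul_const, integral_add (hc₁int₂₃ x) (hc₁int₁₃ x),
      prodval_a hc₁int₂₃ hc₁val₂₃ x, prodval_b hc₁int₁₃ hc₁val₁₃ x] at key
  have t3 : (∫ y, c₂ y x * Real.exp (-∫ u, φ₂ (x - u) * f u) * f y) ≤ C2 * m := by
    have key : (∫ y, c₂ y x * Real.exp (-∫ u, φ₂ (x - u) * f u) * f y) ≤ ∫ y, c₂ y x * m := by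
      refine integral_mono_of_nonneg (.of_forall fun y => mul_nonneg (mul_nonneg (hc₂nn _ _)
        (Real.exp_pos _).le) (hfnn y)) ((hc₂int₁ x).mul_const m) (.of_forall fun y => ?_)
      calc c₂ y x * Real.exp (-∫ u, φ₂ (x - u) * f u) * f y ≤ c₂ y x * f y :=
            mul_le_mul_of_nonneg_right (mul_le_of_le_one_right (hc₂nn _ _) (hE2 x)) (hfnn y)
        _ ≤ c₂ y x * m := mul_le_mul_of_nonneg_left (hfm y) (hc₂nn _ _)
    rwa [integral_mul_const, hc₂val₁ x] at key
  have t4 : (∫ y, c₂ x y * (1 - Real.exp (-∫ u, φ₂ (y - u) * f u)) * f x) ≤ C2 * m := by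
    have key : (∫ y, c₂ x y * (1 - Real.exp (-∫ u, φ₂ (y - u) * f u)) * f x)
        ≤ ∫ y, c₂ x y * m := by
      refine integral_mono_of_nonneg (.of_forall fun y => mul_nonneg (mul_nonneg (hc₂nn _ _)
        (by have := hE2 y; linarith)) (hfnn x)) ((hc₂int₂ x).mul_const m)
        (.of_forall fun y => ?_)
      have h1 : c₂ x y * (1 - Real.exp (-∫ u, φ₂ (y - u) * f u)) ≤ c₂ x y := by
        apply mul_le_of_le_one_right (hc₂nn _ _)
        have := Real.exp_pos (-∫ u, φ₂ (y - u) * f u); linarith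
      calc c₂ x y * (1 - Real.exp (-∫ u, φ₂ (y - u) * f u)) * f x ≤ c₂ x y * f x :=
            mul_le_mul_of_nonneg_right h1 (hfnn x)
        _ ≤ c₂ x y * m := mul_le_mul_of_nonneg_left (hfm x) (hc₂nn _ _)
    calc (∫ y, c₂ x y * (1 - Real.exp (-∫ u, φ₂ (y - u) * f u)) * f x) ≤ ∫ y, c₂ x y * m := key
      _ = C2 * m := by rw [integral_mul_const, hc₂val₂ x]
  unfold R2
  have hsq : m^2 = m * m := sq m
  linarith

end Bounds
section Main
variable {d : ℕ}

set_option maxHeartbeats 2000000 in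
lemma mainLemma
    (c₁ : Rd d → Rd d → Rd d → ℝ) (C1 : ℝ)
    (hc₁meas : Measurable fun p : Rd d × Rd d × Rd d => c₁ p.1 p.2.1 p.2.2)
    (hc₁nn : ∀ x y z, 0 ≤ c₁ x y z)
    (hc₁int₁₂ : ∀ z, Integrable fun p : Rd d × Rd d => c₁ p.1 p.2 z)
    (hc₁int₁₃ : ∀ y, Integrable fun p : Rd d × Rd d => c₁ p.1 y p.2)
    (hc₁int₂₃ : ∀ x, Integrable fun p : Rd d × Rd d => c₁ x p.1 p.2)
    (hc₁val₁₂ : ∀ z, (∫ x, ∫ y, c₁ x y z) = C1)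
    (hc₁val₁₃ : ∀ y, (∫ x, ∫ z, c₁ x y z) = C1)
    (hc₁val₂₃ : ∀ x, (∫ y, ∫ z, c₁ x y z) = C1)
    (c₂ : Rd d → Rd d → ℝ) (C2 : ℝ)
    (hc₂meas : Measurable fun p : Rd d × Rd d => c₂ p.1 p.2)
    (hc₂nn : ∀ x y, 0 ≤ c₂ x y)
    (hc₂int₁ : ∀ y, Integrable fun x => c₂ x y)
    (hc₂int₂ : ∀ x, Integrable fun y => c₂ x y)
    (hc₂val₁ : ∀ y, (∫ x, c₂ x y) = C2)
    (hc₂val₂ : ∀ x, (∫ y, c₂ x y) = C2)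
    (hC2pos : 0 < C2)
    (φ₁ : Rd d → ℝ) (hφ₁meas : Measurable φ₁) (hφ₁nn : ∀ u, 0 ≤ φ₁ u)
    (φ₂ : Rd d → ℝ) (hφ₂meas : Measurable φ₂) (hφ₂nn : ∀ u, 0 ≤ φ₂ u)
    (r : ℝ) (hr : 0 < r)
    (γ Tmax : ℝ) (hγ : 1 ≤ γ) (hTm : 0 < Tmax)
    (hcond : 3/2 * C1 * r * Real.exp (γ * C2 * Tmax) + 2 * C2 ≤ (γ + 1) * C2) :
    ∀ T', 0 ≤ T' → T' ≤ Tmax →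
      ∀ ρ₀ : Rd d → ℝ, MemLinf ρ₀ → (∀ x, 0 ≤ ρ₀ x) → linf ρ₀ ≤ r →
        ∀ ρ : ℝ → Rd d → ℝ, memB T' γ C2 r ρ → memB T' γ C2 r (Fmap c₁ c₂ φ₁ φ₂ C2 ρ₀ ρ) := by
  intro T' hT0 hTle ρ₀ hρ₀mem hρ₀nn hρ₀r ρ hρ
  obtain ⟨hcont, hmem, hnn, hnorm⟩ := hρ
  have hC1nn : 0 ≤ C1 := by
    have h0 : 0 ≤ ∫ y, ∫ z, c₁ (fun _ => (0:ℝ)) y z := double_nonneg fun y z => hc₁nn _ _ _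
    rwa [hc₁val₂₃ (fun _ => (0:ℝ))] at h0
  have hγ0 : (0:ℝ) ≤ γ := by linarith
  set ρb : ℝ → Rd d → ℝ := fun s => ρ (clip T' s) with hρb
  have hbmeas : Measurable fun p : ℝ × Rd d => ρb p.1 p.2 := jointMeas hT0 hcont hmem
  have hρb_nn : ∀ s x, 0 ≤ ρb s x := fun s x => hnn _ (clip_mem hT0 s) x
  have hρbmem : ∀ s, MemLinf (ρb s) := fun s => hmem _ (clip_mem hT0 s)
  -- the norm bound along the path
  have hlinft : ∀ t ∈ Icc (0:ℝ) T', linf (ρ t) ≤ r * Real.exp (γ * C2 * t) := by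
    have hlinf_cont : ContinuousOn (fun t => linf (ρ t)) (Icc 0 T') := by
      rw [Metric.continuousOn_iff]
      intro t ht ε hε
      obtain ⟨δ, hδ0, hδ⟩ := hcont t ht ε hε
      refine ⟨δ, hδ0, fun s hs hdist => ?_⟩
      have h3 := hδ s hs (by rwa [Real.dist_eq] at hdist)
      have h4 := abs_linf_sub_linf_le (hmem s hs).2 (hmem t ht).2
      rw [Real.dist_eq]; exact lt_of_le_of_lt h4 h3
    obtain ⟨M0, hM0⟩ := isCompact_Icc.bddAbove_image hlinf_cont
    have hM0' : ∀ t ∈ Icc (0:ℝ) T', linf (ρ t) ≤ M0 := fun t ht =>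
      hM0 (mem_image_of_mem _ ht)
    have hbddr : BddAbove (Set.range fun t : Icc (0:ℝ) T' =>
        Real.exp (-(γ * C2 * t.1)) * linf (ρ t.1)) := by
      refine ⟨M0, ?_⟩; rintro v ⟨t, rfl⟩
      have h1 : Real.exp (-(γ * C2 * t.1)) ≤ 1 :=
        exp_neg_le_one (mul_nonneg (mul_nonneg hγ0 hC2pos.le) t.2.1)
      calc Real.exp (-(γ * C2 * t.1)) * linf (ρ t.1) ≤ 1 * linf (ρ t.1) :=
            mul_le_mul_of_nonneg_right h1 (linf_nonneg _)
        _ ≤ M0 := by rw [one_mul]; exact hM0' t.1 t.2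
    intro t ht
    have h1 : Real.exp (-(γ * C2 * t)) * linf (ρ t) ≤ r :=
      le_trans (le_ciSup hbddr ⟨t, ht⟩) hnorm
    calc linf (ρ t) = Real.exp (γ * C2 * t) * (Real.exp (-(γ * C2 * t)) * linf (ρ t)) := by
          rw [← mul_assoc, ← Real.exp_add]; simp
      _ ≤ Real.exp (γ * C2 * t) * r :=
          mul_le_mul_of_nonneg_left h1 (Real.exp_pos _).le
      _ = r * Real.exp (γ * C2 * t) := mul_comm _ _
  have hρb_ub : ∀ s x, ρb s x ≤ r * Real.exp (γ * C2 * clip T' s) := by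
    intro s x
    have h1 := abs_le_linf (hρbmem s).2 x
    have h2 := hlinft _ (clip_mem hT0 s)
    have h3 := le_abs_self (ρb s x)
    exact h3.trans (h1.trans h2)
  set M : ℝ := r * Real.exp (γ * C2 * Tmax) with hM
  have hMpos : 0 < M := by positivity
  have hclipTmax : ∀ s, clip T' s ≤ Tmax := fun s => le_trans (clip_mem hT0 s).2 hTle
  have hρbM : ∀ s x, ρb s x ≤ M := by
    intro s x
    refine (hρb_ub s x).trans (mul_le_mul_of_nonneg_left ?_ hr.le)
    exact Real.exp_le_exp.mpr (mul_le_mul_of_nonneg_left (hclipTmax s)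
      (mul_nonneg hγ0 hC2pos.le))
  set hmax : ℝ := C1 * M + C2 with hhmax
  have hhmaxpos : 0 < hmax := by positivity
  have hhlb : ∀ s x, C2 ≤ hker c₁ C2 (ρb s) x := fun s x => hker_lb hc₁nn (hρb_nn s) x
  have hhub : ∀ s x, hker c₁ C2 (ρb s) x ≤ hmax := fun s x =>
    hker_ub hc₁nn hc₁int₁₃ hc₁int₂₃ hc₁val₁₃ hc₁val₂₃ (hρb_nn s) (fun y => hρbM s y) x
  set B : ℝ := 3/2 * C1 * M^2 + 2 * C2 * M with hB
  have hBnn : 0 ≤ B := by positivity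
  have hR2lb : ∀ s x, 0 ≤ R2 c₁ c₂ φ₁ φ₂ (ρb s) x := fun s x =>
    R2_nonneg hc₁nn hc₂nn hφ₁nn hφ₂nn (hρb_nn s) x
  have hR2ubM : ∀ s x, R2 c₁ c₂ φ₁ φ₂ (ρb s) x ≤ B := fun s x =>
    R2_ub hc₁nn hc₂nn hc₁int₁₂ hc₁int₁₃ hc₁int₂₃ hc₁val₁₂ hc₁val₁₃ hc₁val₂₃
      hc₂int₁ hc₂int₂ hc₂val₁ hc₂val₂ hφ₁nn hφ₂nn (hρb_nn s) (fun y => hρbM s y) x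
  have hR2ub' : ∀ s x, R2 c₁ c₂ φ₁ φ₂ (ρb s) x ≤
      3/2 * C1 * (r * Real.exp (γ * C2 * clip T' s))^2
        + 2 * C2 * (r * Real.exp (γ * C2 * clip T' s)) := fun s x =>
    R2_ub hc₁nn hc₂nn hc₁int₁₂ hc₁int₁₃ hc₁int₂₃ hc₁val₁₂ hc₁val₁₃ hc₁val₂₃
      hc₂int₁ hc₂int₂ hc₂val₁ hc₂val₂ hφ₁nn hφ₂nn (hρb_nn s) (fun y => hρb_ub s y) x
  -- measurability along the path
  have hm_hker : Measurable fun q : ℝ × Rd d => hker c₁ C2 (ρb q.1) q.2 :=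
    m_hker hc₁meas hbmeas
  have hm_R2 : Measurable fun q : ℝ × Rd d => R2 c₁ c₂ φ₁ φ₂ (ρb q.1) q.2 :=
    m_R2 hc₁meas hc₂meas hφ₁meas hφ₂meas hbmeas
  have mh : ∀ x, Measurable fun s => hker c₁ C2 (ρb s) x := fun x =>
    hm_hker.comp (measurable_id.prodMk measurable_const)
  have mR : ∀ x, Measurable fun s => R2 c₁ c₂ φ₁ φ₂ (ρb s) x := fun x =>
    hm_R2.comp (measurable_id.prodMk measurable_const)
  have hII : ∀ (x : Rd d) a b, IntervalIntegrable (fun σ => hker c₁ C2 (ρb σ) x) volume a b := by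
    intro x a b
    refine bddMeasII (mh x) (C := hmax) fun s _ => abs_le.mpr ⟨?_, hhub s x⟩
    have := hhlb s x; linarith
  -- the H function
  set H : Rd d → ℝ → ℝ → ℝ := fun x s t => ∫ σ in s..t, hker c₁ C2 (ρb σ) x with hHdef
  have hHadd : ∀ (x : Rd d) a b c, H x a b + H x b c = H x a c := fun x a b c =>
    intervalIntegral.integral_add_adjacent_intervals (hII x a b) (hII x b c)
  have hHlb : ∀ (x : Rd d) s t, s ≤ t → C2 * (t - s) ≤ H x s t := by
    intro x s t hst
    have h := intervalIntegral.integral_mono_on hst (intervalIntegrable_const (c := C2))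
      (hII x s t) (fun u _ => hhlb u x)
    rwa [intervalIntegral.integral_const, smul_eq_mul, mul_comm] at h
  have hHub : ∀ (x : Rd d) s t, s ≤ t → H x s t ≤ hmax * (t - s) := by
    intro x s t hst
    have h := intervalIntegral.integral_mono_on hst (hII x s t)
      (intervalIntegrable_const (c := hmax)) (fun u _ => hhub u x)
    rwa [intervalIntegral.integral_const, smul_eq_mul, mul_comm] at h
  have hHnn : ∀ (x : Rd d) s t, s ≤ t → 0 ≤ H x s t := by
    intro x s t hst
    have h := hHlb x s t hst; nlinarith
  have hHcont : ∀ x : Rd d, Continuous fun s => H x 0 s := by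
    intro x
    refine (LipschitzWith.of_dist_le_mul (K := Real.toNNReal hmax) fun a b => ?_).continuous
    rw [Real.dist_eq, Real.dist_eq, Real.coe_toNNReal _ hhmaxpos.le]
    have hd : H x 0 a - H x 0 b = H x b a := by have := hHadd x 0 b a; linarith
    rw [hd]
    rcases le_total b a with hba | hba
    · rw [abs_of_nonneg (hHnn x b a hba), abs_of_nonneg (by linarith : (0:ℝ) ≤ a - b)]
      exact hHub x b a hba
    · have hsymm : H x b a = -(H x a b) := intervalIntegral.integral_symm a b
      rw [hsymm, abs_neg, abs_of_nonneg (hHnn x a b hba),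
        abs_of_nonpos (by linarith : a - b ≤ 0)]
      have := hHub x a b hba; linarith
  have hHmeas : ∀ (x : Rd d) t, Measurable fun s => H x s t := by
    intro x t
    have he : (fun s => H x s t) = fun s => H x 0 t - H x 0 s := funext fun s => by
      have := hHadd x 0 s t; linarith
    rw [he]; exact measurable_const.sub (hHcont x).measurable
  have hII2 : ∀ (x : Rd d) (t' : ℝ), 0 ≤ t' → ∀ a b, a ∈ Icc 0 t' → b ∈ Icc 0 t' →
      IntervalIntegrable (fun s => R2 c₁ c₂ φ₁ φ₂ (ρb s) x * Real.exp (-(H x s t')))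
        volume a b := by
    intro x t' ht' a b ha hb
    have hgmeas : Measurable fun s => R2 c₁ c₂ φ₁ φ₂ (ρb s) x * Real.exp (-(H x s t')) :=
      (mR x).mul (Real.measurable_exp.comp (hHmeas x t').neg)
    refine bddMeasII hgmeas (C := B) fun s hs => ?_
    have hsub : Set.uIoc a b ⊆ Icc 0 t' :=
      Set.uIoc_subset_uIcc.trans (Set.uIcc_subset_Icc ha hb)
    have hs' := hsub hs
    have h1 : Real.exp (-(H x s t')) ≤ 1 := exp_neg_le_one (hHnn x s t' hs'.2)
    rw [abs_mul, abs_of_nonneg (hR2lb s x), abs_of_nonneg (Real.exp_pos _).le]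
    calc R2 c₁ c₂ φ₁ φ₂ (ρb s) x * Real.exp (-(H x s t')) ≤ B * 1 :=
          mul_le_mul (hR2ubM s x) h1 (Real.exp_pos _).le hBnn
      _ = B := mul_one B
  -- transfer from ρ to ρb on [0,T']
  have hcl : ∀ t ∈ Icc (0:ℝ) T', ∀ s ∈ Icc (0:ℝ) t, ρ s = ρb s := by
    intro t ht s hs
    have h : clip T' s = s := clip_eq ⟨hs.1, le_trans hs.2 ht.2⟩
    simp only [hρb, h]
  have hFeq : ∀ t ∈ Icc (0:ℝ) T', ∀ x,
      Fmap c₁ c₂ φ₁ φ₂ C2 ρ₀ ρ t x = Fmap c₁ c₂ φ₁ φ₂ C2 ρ₀ ρb t x := by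
    intro t ht x
    unfold Fmap
    have h1 : (∫ s in (0:ℝ)..t, hker c₁ C2 (ρ s) x) = ∫ s in (0:ℝ)..t, hker c₁ C2 (ρb s) x := by
      refine intervalIntegral.integral_congr fun s hs => ?_
      rw [Set.uIcc_of_le ht.1] at hs
      rw [hcl t ht s hs]
    rw [h1]
    congr 1
    refine intervalIntegral.integral_congr fun s hs => ?_
    rw [Set.uIcc_of_le ht.1] at hs
    have h2 : (∫ σ in s..t, hker c₁ C2 (ρ σ) x) = ∫ σ in s..t, hker c₁ C2 (ρb σ) x := by
      refine intervalIntegral.integral_congr fun σ hσ => ?_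
      rw [Set.uIcc_of_le hs.2] at hσ
      rw [hcl t ht σ ⟨le_trans hs.1 hσ.1, hσ.2⟩]
    rw [hcl t ht s hs, h2]
  have hFb : ∀ (t : ℝ) (x : Rd d), Fmap c₁ c₂ φ₁ φ₂ C2 ρ₀ ρb t x
      = ρ₀ x * Real.exp (-(H x 0 t))
        + ∫ s in (0:ℝ)..t, R2 c₁ c₂ φ₁ φ₂ (ρb s) x * Real.exp (-(H x s t)) :=
    fun t x => rfl
  -- nonnegativity of the image
  have hFnnb : ∀ t ∈ Icc (0:ℝ) T', ∀ x, 0 ≤ Fmap c₁ c₂ φ₁ φ₂ C2 ρ₀ ρb t x := by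
    intro t ht x
    rw [hFb]
    have h1 : 0 ≤ ρ₀ x * Real.exp (-(H x 0 t)) := mul_nonneg (hρ₀nn x) (Real.exp_pos _).le
    have h2 : 0 ≤ ∫ s in (0:ℝ)..t, R2 c₁ c₂ φ₁ φ₂ (ρb s) x * Real.exp (-(H x s t)) :=
      intervalIntegral.integral_nonneg ht.1 fun s _ =>
        mul_nonneg (hR2lb s x) (Real.exp_pos _).le
    linarith
  -- upper bound on the image
  have hFub : ∀ t ∈ Icc (0:ℝ) T', ∀ x,
      Fmap c₁ c₂ φ₁ φ₂ C2 ρ₀ ρb t x ≤ r * Real.exp (γ * C2 * t) := by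
    intro t ht x
    rw [hFb]
    have hterm1 : ρ₀ x * Real.exp (-(H x 0 t)) ≤ r * Real.exp (-(C2 * t)) := by
      have h1 : ρ₀ x ≤ r := ((le_abs_self _).trans (abs_le_linf hρ₀mem.2 x)).trans hρ₀r
      have h2 : Real.exp (-(H x 0 t)) ≤ Real.exp (-(C2 * t)) := by
        apply Real.exp_le_exp.mpr
        have := hHlb x 0 t ht.1; linarith
      exact mul_le_mul h1 h2 (Real.exp_pos _).le hr.le
    have hterm2 : (∫ s in (0:ℝ)..t, R2 c₁ c₂ φ₁ φ₂ (ρb s) x * Real.exp (-(H x s t)))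
        ≤ ∫ s in (0:ℝ)..t, r * ((γ+1) * C2) * Real.exp ((γ+1) * C2 * s)
            * Real.exp (-(C2 * t)) := by
      refine intervalIntegral.integral_mono_on ht.1
        (hII2 x t ht.1 0 t ⟨le_refl 0, ht.1⟩ ⟨ht.1, le_refl t⟩)
        (((continuous_const.mul (Real.continuous_exp.comp
          (continuous_const.mul continuous_id))).mul continuous_const).intervalIntegrable _ _)
        (fun s hs => ?_)
      have hclip : clip T' s = s := clip_eq ⟨hs.1, le_trans hs.2 ht.2⟩
      have hkey : 3/2 * C1 * r * Real.exp (γ * C2 * s) + 2 * C2 ≤ (γ+1) * C2 := by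
        refine le_trans (add_le_add_left (mul_le_mul_of_nonneg_left
          (Real.exp_le_exp.mpr (mul_le_mul_of_nonneg_left
            (le_trans hs.2 (le_trans ht.2 hTle)) (mul_nonneg hγ0 hC2pos.le)))
          (by positivity)) _) hcond
      have hR2s := hR2ub' s x
      rw [hclip] at hR2s
      have hexp : Real.exp (-(H x s t)) ≤ Real.exp (-(C2 * (t - s))) := by
        apply Real.exp_le_exp.mpr
        have := hHlb x s t hs.2; linarith
      have hEpos := Real.exp_pos (γ * C2 * s)
      have h5 : 3/2 * C1 * (r * Real.exp (γ * C2 * s))^2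
          + 2 * C2 * (r * Real.exp (γ * C2 * s))
          ≤ r * ((γ+1) * C2) * Real.exp (γ * C2 * s) := by
        have hmul := mul_le_mul_of_nonneg_right hkey (mul_nonneg hr.le hEpos.le)
        nlinarith [hmul]
      have hfac : Real.exp (-(C2 * (t - s))) = Real.exp (C2 * s) * Real.exp (-(C2 * t)) := by
        rw [← Real.exp_add]; congr 1; ring
      have hnn5 : 0 ≤ 3/2 * C1 * (r * Real.exp (γ * C2 * s))^2
          + 2 * C2 * (r * Real.exp (γ * C2 * s)) := by
        have := mul_nonneg (by linarith : (0:ℝ) ≤ 3/2 * C1)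
          (sq_nonneg (r * Real.exp (γ * C2 * s)))
        have := mul_nonneg (by linarith : (0:ℝ) ≤ 2 * C2)
          (mul_nonneg hr.le hEpos.le)
        linarith
      calc R2 c₁ c₂ φ₁ φ₂ (ρb s) x * Real.exp (-(H x s t))
          ≤ (3/2 * C1 * (r * Real.exp (γ * C2 * s))^2
              + 2 * C2 * (r * Real.exp (γ * C2 * s))) * Real.exp (-(C2 * (t - s))) :=
            mul_le_mul hR2s hexp (Real.exp_pos _).le hnn5
        _ ≤ (r * ((γ+1) * C2) * Real.exp (γ * C2 * s)) * Real.exp (-(C2 * (t - s))) :=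
            mul_le_mul_of_nonneg_right h5 (Real.exp_pos _).le
        _ = r * ((γ+1) * C2) * Real.exp ((γ+1) * C2 * s) * Real.exp (-(C2 * t)) := by
            rw [hfac, show (γ+1) * C2 * s = γ * C2 * s + C2 * s from by ring, Real.exp_add]
            ring
    have hval : (∫ s in (0:ℝ)..t, r * ((γ+1) * C2) * Real.exp ((γ+1) * C2 * s)
        * Real.exp (-(C2 * t)))
        = r * Real.exp (-(C2 * t)) * (Real.exp ((γ+1) * C2 * t) - 1) := by
      rw [intervalIntegral.integral_mul_const]
      have hderiv : ∀ u ∈ Set.uIcc (0:ℝ) t, HasDerivAt (fun s => r * Real.exp ((γ+1) * C2 * s))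
          (r * ((γ+1) * C2) * Real.exp ((γ+1) * C2 * u)) u := by
        intro u _
        have h1 : HasDerivAt (fun s : ℝ => (γ+1) * C2 * s) ((γ+1) * C2) u := by
          simpa using (hasDerivAt_id u).const_mul ((γ+1) * C2)
        have h3 := (h1.exp).const_mul r
        exact h3.congr_deriv (by ring)
      rw [intervalIntegral.integral_eq_sub_of_hasDerivAt hderiv
        ((continuous_const.mul (Real.continuous_exp.comp
          (continuous_const.mul continuous_id))).intervalIntegrable _ _)]
      rw [mul_zero, Real.exp_zero]
      ring
    have hfinal : r * Real.exp (-(C2 * t)) + r * Real.exp (-(C2 * t))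
        * (Real.exp ((γ+1) * C2 * t) - 1) = r * Real.exp (γ * C2 * t) := by
      have h6 : Real.exp (-(C2 * t)) * Real.exp ((γ+1) * C2 * t) = Real.exp (γ * C2 * t) := by
        rw [← Real.exp_add]; congr 1; ring
      calc r * Real.exp (-(C2 * t)) + r * Real.exp (-(C2 * t)) * (Real.exp ((γ+1) * C2 * t) - 1)
          = r * (Real.exp (-(C2 * t)) * Real.exp ((γ+1) * C2 * t)) := by ring
        _ = r * Real.exp (γ * C2 * t) := by rw [h6]
    rw [hval] at hterm2
    linarith
  -- measurability of the image
  have hFmeas : ∀ t ∈ Icc (0:ℝ) T',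
      Measurable fun x => Fmap c₁ c₂ φ₁ φ₂ C2 ρ₀ ρb t x := by
    intro t ht
    have hKfull : Measurable fun x : Rd d => ∫ σ in Ioc (0:ℝ) t, hker c₁ C2 (ρb σ) x :=
      meas_int_restr (hm_hker.comp (measurable_snd.prodMk measurable_fst)) _
    have hp1 : Measurable fun x => ρ₀ x * Real.exp (-(H x 0 t)) := by
      have hH0t : (fun x : Rd d => H x 0 t)
          = fun x => ∫ σ in Ioc (0:ℝ) t, hker c₁ C2 (ρb σ) x :=
        funext fun x => by simp only [hHdef]; exact intervalIntegral.integral_of_le ht.1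
      have hm1 : Measurable fun x : Rd d => H x 0 t := by rw [hH0t]; exact hKfull
      exact hρ₀mem.1.mul (Real.measurable_exp.comp hm1.neg)
    have hcnd : Measurable fun w : (Rd d × ℝ) × ℝ =>
        if w.2 ≤ w.1.2 then hker c₁ C2 (ρb w.2) w.1.1 else 0 := by
      refine Measurable.ite ?_
        (hm_hker.comp (measurable_snd.prodMk (measurable_fst.comp measurable_fst)))
        measurable_const
      exact measurableSet_le measurable_snd (measurable_snd.comp measurable_fst)
    have hK : Measurable fun p : Rd d × ℝ =>
        ∫ σ in Ioc (0:ℝ) t, (if σ ≤ p.2 then hker c₁ C2 (ρb σ) p.1 else 0) :=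
      meas_int_restr hcnd _
    have hKeq : ∀ (x : Rd d) s, s ∈ Icc (0:ℝ) t →
        (∫ σ in Ioc (0:ℝ) t, (if σ ≤ s then hker c₁ C2 (ρb σ) x else 0))
          = ∫ σ in (0:ℝ)..s, hker c₁ C2 (ρb σ) x := by
      intro x s hs
      have h1 : (fun σ => if σ ≤ s then hker c₁ C2 (ρb σ) x else 0)
          = (Iic s).indicator (fun σ => hker c₁ C2 (ρb σ) x) := by
        funext σ; rw [Set.indicator_apply]; simp [Set.mem_Iic]
      rw [h1, integral_indicator measurableSet_Iic,
        Measure.restrict_restrict measurableSet_Iic]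
      have h2 : Iic s ∩ Ioc (0:ℝ) t = Ioc 0 s := by
        ext σ
        simp only [mem_inter_iff, mem_Iic, mem_Ioc]
        constructor
        · rintro ⟨h3, h4, h5⟩; exact ⟨h4, h3⟩
        · rintro ⟨h3, h4⟩; exact ⟨h4, h3, h4.trans hs.2⟩
      rw [h2, intervalIntegral.integral_of_le hs.1]
    have hrep : Measurable fun p : Rd d × ℝ => R2 c₁ c₂ φ₁ φ₂ (ρb p.2) p.1 *
        Real.exp (-((∫ σ in Ioc (0:ℝ) t, hker c₁ C2 (ρb σ) p.1)
          - ∫ σ in Ioc (0:ℝ) t, (if σ ≤ p.2 then hker c₁ C2 (ρb σ) p.1 else 0))) :=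
      (hm_R2.comp (measurable_snd.prodMk measurable_fst)).mul
        (Real.measurable_exp.comp ((hKfull.comp measurable_fst).sub hK).neg)
    have hp2 : Measurable fun x =>
        ∫ s in (0:ℝ)..t, R2 c₁ c₂ φ₁ φ₂ (ρb s) x * Real.exp (-(H x s t)) := by
      have he : (fun x => ∫ s in (0:ℝ)..t, R2 c₁ c₂ φ₁ φ₂ (ρb s) x * Real.exp (-(H x s t)))
          = fun x => ∫ s in Ioc (0:ℝ) t, R2 c₁ c₂ φ₁ φ₂ (ρb s) x *
              Real.exp (-((∫ σ in Ioc (0:ℝ) t, hker c₁ C2 (ρb σ) x)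
                - ∫ σ in Ioc (0:ℝ) t, (if σ ≤ s then hker c₁ C2 (ρb σ) x else 0))) := by
        funext x
        rw [intervalIntegral.integral_of_le ht.1]
        refine setIntegral_congr_fun measurableSet_Ioc fun s hs => ?_
        have hs' : s ∈ Icc (0:ℝ) t := Ioc_subset_Icc_self hs
        rw [hKeq x s hs']
        have h3 : (∫ σ in Ioc (0:ℝ) t, hker c₁ C2 (ρb σ) x)
            - (∫ σ in (0:ℝ)..s, hker c₁ C2 (ρb σ) x) = H x s t := by
          rw [← intervalIntegral.integral_of_le ht.1]
          have hadd := intervalIntegral.integral_add_adjacent_intervals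
            (hII x 0 s) (hII x s t)
          simp only [hHdef]; linarith
        rw [h3]
      rw [he]
      exact meas_int_restr hrep _
    have heq : (fun x => Fmap c₁ c₂ φ₁ φ₂ C2 ρ₀ ρb t x)
        = fun x => ρ₀ x * Real.exp (-(H x 0 t))
          + ∫ s in (0:ℝ)..t, R2 c₁ c₂ φ₁ φ₂ (ρb s) x * Real.exp (-(H x s t)) :=
      funext fun x => hFb t x
    rw [heq]
    exact hp1.add hp2
  -- Lipschitz estimate in time
  have haux : ∀ a ∈ Icc (0:ℝ) T', ∀ b ∈ Icc (0:ℝ) T', a ≤ b → ∀ x,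
      |Fmap c₁ c₂ φ₁ φ₂ C2 ρ₀ ρb b x - Fmap c₁ c₂ φ₁ φ₂ C2 ρ₀ ρb a x|
        ≤ (r * hmax + B * hmax * Tmax + B) * (b - a) := by
    intro a ha b hb hab x
    rw [hFb, hFb]
    have hb0 : (0:ℝ) ≤ b := hb.1
    have haIb : a ∈ Icc (0:ℝ) b := ⟨ha.1, hab⟩
    have h0Ib : (0:ℝ) ∈ Icc (0:ℝ) b := ⟨le_refl 0, hb0⟩
    have hbIb : b ∈ Icc (0:ℝ) b := ⟨hb0, le_refl b⟩
    have haIa : a ∈ Icc (0:ℝ) a := ⟨ha.1, le_refl a⟩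
    have h0Ia : (0:ℝ) ∈ Icc (0:ℝ) a := ⟨le_refl 0, ha.1⟩
    have hsplit : (∫ s in (0:ℝ)..b, R2 c₁ c₂ φ₁ φ₂ (ρb s) x * Real.exp (-(H x s b)))
        = (∫ s in (0:ℝ)..a, R2 c₁ c₂ φ₁ φ₂ (ρb s) x * Real.exp (-(H x s b)))
          + ∫ s in a..b, R2 c₁ c₂ φ₁ φ₂ (ρb s) x * Real.exp (-(H x s b)) :=
      (intervalIntegral.integral_add_adjacent_intervals
        (hII2 x b hb0 0 a h0Ib haIb) (hII2 x b hb0 a b haIb hbIb)).symm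
    have hdiff : (∫ s in (0:ℝ)..a, R2 c₁ c₂ φ₁ φ₂ (ρb s) x * Real.exp (-(H x s b)))
        - (∫ s in (0:ℝ)..a, R2 c₁ c₂ φ₁ φ₂ (ρb s) x * Real.exp (-(H x s a)))
        = ∫ s in (0:ℝ)..a, (R2 c₁ c₂ φ₁ φ₂ (ρb s) x * Real.exp (-(H x s b))
            - R2 c₁ c₂ φ₁ φ₂ (ρb s) x * Real.exp (-(H x s a))) :=
      (intervalIntegral.integral_sub (hII2 x b hb0 0 a h0Ib haIb)
        (hII2 x a ha.1 0 a h0Ia haIa)).symm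
    have hHab2 : H x a b ≤ hmax * (b - a) := hHub x a b hab
    have hHabnn : 0 ≤ H x a b := hHnn x a b hab
    have hbd1 : |ρ₀ x * (Real.exp (-(H x 0 b)) - Real.exp (-(H x 0 a)))|
        ≤ r * (hmax * (b - a)) := by
      rw [abs_mul, abs_of_nonneg (hρ₀nn x)]
      have h1 : ρ₀ x ≤ r := ((le_abs_self _).trans (abs_le_linf hρ₀mem.2 x)).trans hρ₀r
      have h2 : |Real.exp (-(H x 0 b)) - Real.exp (-(H x 0 a))| ≤ hmax * (b - a) := by
        refine le_trans (exp_lip (hHnn x 0 b hb0) (hHnn x 0 a ha.1)) ?_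
        have h3 : H x 0 b - H x 0 a = H x a b := by have := hHadd x 0 a b; linarith
        rw [h3, abs_of_nonneg hHabnn]; exact hHab2
      exact mul_le_mul h1 h2 (abs_nonneg _) hr.le
    have hbd2 : |∫ s in (0:ℝ)..a, (R2 c₁ c₂ φ₁ φ₂ (ρb s) x * Real.exp (-(H x s b))
        - R2 c₁ c₂ φ₁ φ₂ (ρb s) x * Real.exp (-(H x s a)))|
        ≤ B * (hmax * (b - a)) * |a - 0| := by
      rw [← Real.norm_eq_abs]
      refine intervalIntegral.norm_integral_le_of_norm_le_const fun s hs => ?_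
      rw [Set.uIoc_of_le ha.1] at hs
      have hsa : s ≤ a := hs.2
      have hsb : s ≤ b := hsa.trans hab
      rw [Real.norm_eq_abs, ← mul_sub, abs_mul, abs_of_nonneg (hR2lb s x)]
      have h2 : |Real.exp (-(H x s b)) - Real.exp (-(H x s a))| ≤ hmax * (b - a) := by
        refine le_trans (exp_lip (hHnn x s b hsb) (hHnn x s a hsa)) ?_
        have h3 : H x s b - H x s a = H x a b := by have := hHadd x s a b; linarith
        rw [h3, abs_of_nonneg hHabnn]; exact hHab2
      exact mul_le_mul (hR2ubM s x) h2 (abs_nonneg _) hBnn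
    have hbd3 : |∫ s in a..b, R2 c₁ c₂ φ₁ φ₂ (ρb s) x * Real.exp (-(H x s b))|
        ≤ B * |b - a| := by
      rw [← Real.norm_eq_abs]
      refine intervalIntegral.norm_integral_le_of_norm_le_const fun s hs => ?_
      rw [Set.uIoc_of_le hab] at hs
      rw [Real.norm_eq_abs, abs_mul, abs_of_nonneg (hR2lb s x),
        abs_of_nonneg (Real.exp_pos _).le]
      calc R2 c₁ c₂ φ₁ φ₂ (ρb s) x * Real.exp (-(H x s b)) ≤ B * 1 :=
            mul_le_mul (hR2ubM s x) (exp_neg_le_one (hHnn x s b hs.2)) (Real.exp_pos _).le hBnn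
        _ = B := mul_one B
    have hdecomp : (ρ₀ x * Real.exp (-(H x 0 b))
          + ∫ s in (0:ℝ)..b, R2 c₁ c₂ φ₁ φ₂ (ρb s) x * Real.exp (-(H x s b)))
        - (ρ₀ x * Real.exp (-(H x 0 a))
          + ∫ s in (0:ℝ)..a, R2 c₁ c₂ φ₁ φ₂ (ρb s) x * Real.exp (-(H x s a)))
        = ρ₀ x * (Real.exp (-(H x 0 b)) - Real.exp (-(H x 0 a)))
          + (∫ s in (0:ℝ)..a, (R2 c₁ c₂ φ₁ φ₂ (ρb s) x * Real.exp (-(H x s b))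
              - R2 c₁ c₂ φ₁ φ₂ (ρb s) x * Real.exp (-(H x s a))))
          + ∫ s in a..b, R2 c₁ c₂ φ₁ φ₂ (ρb s) x * Real.exp (-(H x s b)) := by
      rw [hsplit, ← hdiff]; ring
    rw [hdecomp]
    have habs : |ρ₀ x * (Real.exp (-(H x 0 b)) - Real.exp (-(H x 0 a)))
          + (∫ s in (0:ℝ)..a, (R2 c₁ c₂ φ₁ φ₂ (ρb s) x * Real.exp (-(H x s b))
              - R2 c₁ c₂ φ₁ φ₂ (ρb s) x * Real.exp (-(H x s a))))
          + ∫ s in a..b, R2 c₁ c₂ φ₁ φ₂ (ρb s) x * Real.exp (-(H x s b))|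
        ≤ |ρ₀ x * (Real.exp (-(H x 0 b)) - Real.exp (-(H x 0 a)))|
          + |∫ s in (0:ℝ)..a, (R2 c₁ c₂ φ₁ φ₂ (ρb s) x * Real.exp (-(H x s b))
              - R2 c₁ c₂ φ₁ φ₂ (ρb s) x * Real.exp (-(H x s a)))|
          + |∫ s in a..b, R2 c₁ c₂ φ₁ φ₂ (ρb s) x * Real.exp (-(H x s b))| :=
      (abs_add_le _ _).trans (add_le_add_left (abs_add_le _ _) _)
    have ha0 : |a - (0:ℝ)| = a := by rw [sub_zero, abs_of_nonneg ha.1]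
    have hab0 : |b - a| = b - a := abs_of_nonneg (by linarith)
    rw [ha0] at hbd2
    rw [hab0] at hbd3
    have haT : a ≤ Tmax := le_trans ha.2 hTle
    have hba0 : 0 ≤ b - a := by linarith
    have h7 : B * (hmax * (b - a)) * a ≤ B * hmax * Tmax * (b - a) := by
      have h8 : B * (hmax * (b - a)) * a ≤ B * (hmax * (b - a)) * Tmax :=
        mul_le_mul_of_nonneg_left haT
          (mul_nonneg hBnn (mul_nonneg hhmaxpos.le hba0))
      nlinarith
    calc _ ≤ _ := habs
      _ ≤ r * (hmax * (b - a)) + B * hmax * Tmax * (b - a) + B * (b - a) := by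
          have := hbd1; have := hbd2; have := hbd3; linarith
      _ = (r * hmax + B * hmax * Tmax + B) * (b - a) := by ring
  -- assemble memB
  refine ⟨?_, ?_, ?_, ?_⟩
  · -- continuity
    intro t ht ε hε
    have hK0 : 0 ≤ r * hmax + B * hmax * Tmax + B := by
      have h1 := mul_pos hr hhmaxpos
      have h2 : 0 ≤ B * hmax * Tmax := mul_nonneg (mul_nonneg hBnn hhmaxpos.le) hTm.le
      linarith
    refine ⟨ε / (r * hmax + B * hmax * Tmax + B + 1), by positivity, fun s hs hd => ?_⟩
    have hpt : ∀ x, |Fmap c₁ c₂ φ₁ φ₂ C2 ρ₀ ρ s x - Fmap c₁ c₂ φ₁ φ₂ C2 ρ₀ ρ t x|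
        ≤ (r * hmax + B * hmax * Tmax + B) * |s - t| := by
      intro x
      rw [hFeq s hs x, hFeq t ht x]
      rcases le_total s t with h | h
      · rw [abs_sub_comm, abs_sub_comm s t, abs_of_nonneg (by linarith : (0:ℝ) ≤ t - s)]
        exact haux s hs t ht h x
      · rw [abs_of_nonneg (by linarith : (0:ℝ) ≤ s - t)]
        exact haux t ht s hs h x
    have hlinfb : linf (fun x => Fmap c₁ c₂ φ₁ φ₂ C2 ρ₀ ρ s x
        - Fmap c₁ c₂ φ₁ φ₂ C2 ρ₀ ρ t x) ≤ (r * hmax + B * hmax * Tmax + B) * |s - t| :=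
      linf_le fun x => hpt x
    calc linf (fun x => Fmap c₁ c₂ φ₁ φ₂ C2 ρ₀ ρ s x - Fmap c₁ c₂ φ₁ φ₂ C2 ρ₀ ρ t x)
        ≤ (r * hmax + B * hmax * Tmax + B) * |s - t| := hlinfb
      _ ≤ (r * hmax + B * hmax * Tmax + B) * (ε / (r * hmax + B * hmax * Tmax + B + 1)) :=
          mul_le_mul_of_nonneg_left hd.le hK0
      _ < (r * hmax + B * hmax * Tmax + B + 1) * (ε / (r * hmax + B * hmax * Tmax + B + 1)) := by
          apply mul_lt_mul_of_pos_right (by linarith) (by positivity)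
      _ = ε := by field_simp
  · -- MemLinf
    intro t ht
    constructor
    · have heq2 : Fmap c₁ c₂ φ₁ φ₂ C2 ρ₀ ρ t = fun x => Fmap c₁ c₂ φ₁ φ₂ C2 ρ₀ ρb t x :=
        funext fun x => hFeq t ht x
      rw [heq2]
      exact hFmeas t ht
    · refine ⟨r * Real.exp (γ * C2 * t), fun x => ?_⟩
      rw [hFeq t ht x, abs_of_nonneg (hFnnb t ht x)]
      exact hFub t ht x
  · -- nonnegativity
    intro t ht x
    rw [hFeq t ht x]
    exact hFnnb t ht x
  · -- norm bound
    unfold normTg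
    haveI : Nonempty (Icc (0:ℝ) T') := ⟨⟨0, le_refl 0, hT0⟩⟩
    refine ciSup_le fun t => ?_
    have h1 : linf (Fmap c₁ c₂ φ₁ φ₂ C2 ρ₀ ρ t.1) ≤ r * Real.exp (γ * C2 * t.1) := by
      refine linf_le fun x => ?_
      rw [hFeq t.1 t.2 x, abs_of_nonneg (hFnnb t.1 t.2 x)]
      exact hFub t.1 t.2 x
    calc Real.exp (-(γ * C2 * t.1)) * linf (Fmap c₁ c₂ φ₁ φ₂ C2 ρ₀ ρ t.1)
        ≤ Real.exp (-(γ * C2 * t.1)) * (r * Real.exp (γ * C2 * t.1)) :=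
          mul_le_mul_of_nonneg_left h1 (Real.exp_pos _).le
      _ = r * (Real.exp (-(γ * C2 * t.1)) * Real.exp (γ * C2 * t.1)) := by ring
      _ = r := by rw [← Real.exp_add]; simp

end Main
theorem statement1 {d : ℕ} (hd : 1 ≤ d)
    (c₁ : Rd d → Rd d → Rd d → ℝ) (C1 : ℝ)
    (hc₁meas : Measurable fun p : Rd d × Rd d × Rd d => c₁ p.1 p.2.1 p.2.2)
    (hc₁nn : ∀ x y z, 0 ≤ c₁ x y z)
    (hc₁sym : ∀ x y z, c₁ x y z = c₁ y x z)
    (hc₁int₁₂ : ∀ z, Integrable fun p : Rd d × Rd d => c₁ p.1 p.2 z)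
    (hc₁int₁₃ : ∀ y, Integrable fun p : Rd d × Rd d => c₁ p.1 y p.2)
    (hc₁int₂₃ : ∀ x, Integrable fun p : Rd d × Rd d => c₁ x p.1 p.2)
    (hc₁val₁₂ : ∀ z, (∫ x, ∫ y, c₁ x y z) = C1)
    (hc₁val₁₃ : ∀ y, (∫ x, ∫ z, c₁ x y z) = C1)
    (hc₁val₂₃ : ∀ x, (∫ y, ∫ z, c₁ x y z) = C1)
    (c₂ : Rd d → Rd d → ℝ) (C2 : ℝ)
    (hc₂meas : Measurable fun p : Rd d × Rd d => c₂ p.1 p.2)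
    (hc₂nn : ∀ x y, 0 ≤ c₂ x y)
    (hc₂int₁ : ∀ y, Integrable fun x => c₂ x y)
    (hc₂int₂ : ∀ x, Integrable fun y => c₂ x y)
    (hc₂val₁ : ∀ y, (∫ x, c₂ x y) = C2)
    (hc₂val₂ : ∀ x, (∫ y, c₂ x y) = C2)
    (hC2pos : 0 < C2)
    (φ₁ : Rd d → ℝ) (Φ₁ : ℝ) (hφ₁meas : Measurable φ₁) (hφ₁nn : ∀ u, 0 ≤ φ₁ u)
    (hφ₁int : Integrable φ₁) (hφ₁val : (∫ u, φ₁ u) = Φ₁)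
    (φ₂ : Rd d → ℝ) (Φ₂ : ℝ) (hφ₂meas : Measurable φ₂) (hφ₂nn : ∀ u, 0 ≤ φ₂ u)
    (hφ₂int : Integrable φ₂) (hφ₂val : (∫ u, φ₂ u) = Φ₂)
    (r : ℝ) (hr : 0 < r) :
    (∃ γ > (0:ℝ), ∃ Tmax > (0:ℝ), ∀ T' : ℝ, 0 ≤ T' → T' ≤ Tmax →
        ∀ ρ₀ : Rd d → ℝ, MemLinf ρ₀ → (∀ x, 0 ≤ ρ₀ x) → linf ρ₀ ≤ r →
          ∀ ρ : ℝ → Rd d → ℝ, memB T' γ C2 r ρ →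
            memB T' γ C2 r (Fmap c₁ c₂ φ₁ φ₂ C2 ρ₀ ρ)) ∧
    (∀ γ : ℝ, γ > 1 + 3 * C1 * r / (2 * C2) → ∃ Tmax > (0:ℝ), ∀ T' : ℝ, 0 ≤ T' → T' ≤ Tmax →
        ∀ ρ₀ : Rd d → ℝ, MemLinf ρ₀ → (∀ x, 0 ≤ ρ₀ x) → linf ρ₀ ≤ r →
          ∀ ρ : ℝ → Rd d → ℝ, memB T' γ C2 r ρ →
            memB T' γ C2 r (Fmap c₁ c₂ φ₁ φ₂ C2 ρ₀ ρ)) := by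

  have hC1nn : 0 ≤ C1 := by
    have h0 : 0 ≤ ∫ y, ∫ z, c₁ (fun _ => (0:ℝ)) y z := double_nonneg fun y z => hc₁nn _ _ _
    rwa [hc₁val₂₃ _] at h0
  have hfrac : 0 ≤ 3 * C1 * r / (2 * C2) := by positivity
  have main : ∀ γ : ℝ, γ > 1 + 3 * C1 * r / (2 * C2) → ∃ Tmax > (0:ℝ),
      ∀ T' : ℝ, 0 ≤ T' → T' ≤ Tmax →
        ∀ ρ₀ : Rd d → ℝ, MemLinf ρ₀ → (∀ x, 0 ≤ ρ₀ x) → linf ρ₀ ≤ r →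
          ∀ ρ : ℝ → Rd d → ℝ, memB T' γ C2 r ρ →
            memB T' γ C2 r (Fmap c₁ c₂ φ₁ φ₂ C2 ρ₀ ρ) := by
    intro γ hγ
    have hγ1 : 1 ≤ γ := by linarith
    rcases eq_or_lt_of_le hC1nn with hC1 | hC1
    · refine ⟨1, one_pos, ?_⟩
      refine mainLemma c₁ C1 hc₁meas hc₁nn hc₁int₁₂ hc₁int₁₃ hc₁int₂₃ hc₁val₁₂ hc₁val₁₃
        hc₁val₂₃ c₂ C2 hc₂meas hc₂nn hc₂int₁ hc₂int₂ hc₂val₁ hc₂val₂ hC2pos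
        φ₁ hφ₁meas hφ₁nn φ₂ hφ₂meas hφ₂nn r hr γ 1 hγ1 one_pos ?_
      rw [← hC1]
      have hγ2 : 1 < γ := by
        have : 3 * C1 * r / (2 * C2) = 0 := by rw [← hC1]; ring_nf
        rw [this] at hγ; linarith
      nlinarith [hC2pos]
    · have hq1 : 1 < ((γ - 1) * C2) / (3/2 * C1 * r) := by
        rw [lt_div_iff₀ (by positivity)]
        have h2 := (div_lt_iff₀ (by positivity : (0:ℝ) < 2 * C2)).mp
          (by linarith : 3 * C1 * r / (2 * C2) < γ - 1)
        linarith
      have hγC2 : 0 < γ * C2 := mul_pos (by linarith) hC2pos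
      have hTmpos : 0 < Real.log (((γ - 1) * C2) / (3/2 * C1 * r)) / (γ * C2) :=
        div_pos (Real.log_pos hq1) hγC2
      refine ⟨_, hTmpos, ?_⟩
      refine mainLemma c₁ C1 hc₁meas hc₁nn hc₁int₁₂ hc₁int₁₃ hc₁int₂₃ hc₁val₁₂ hc₁val₁₃
        hc₁val₂₃ c₂ C2 hc₂meas hc₂nn hc₂int₁ hc₂int₂ hc₂val₁ hc₂val₂ hC2pos
        φ₁ hφ₁meas hφ₁nn φ₂ hφ₂meas hφ₂nn r hr γ _ hγ1 hTmpos ?_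
      have hexp : Real.exp (γ * C2 * (Real.log (((γ - 1) * C2) / (3/2 * C1 * r)) / (γ * C2)))
          = ((γ - 1) * C2) / (3/2 * C1 * r) := by
        rw [mul_comm (γ * C2), div_mul_cancel₀ _ (ne_of_gt hγC2),
          Real.exp_log (by linarith : (0:ℝ) < ((γ - 1) * C2) / (3/2 * C1 * r))]
      rw [hexp]
      have hcan : 3/2 * C1 * r * (((γ - 1) * C2) / (3/2 * C1 * r)) = (γ - 1) * C2 := by
        rw [mul_comm (3/2 * C1 * r), div_mul_cancel₀ _ (by positivity : 3/2 * C1 * r ≠ 0)]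
      rw [hcan]
      linarith
  refine ⟨⟨2 + 3 * C1 * r / (2 * C2), by linarith, main _ (by linarith)⟩, main⟩
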